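/- arXiv:1901.05721 — 3 statements merged into one kernel-verified Lean document; each statement's English description precedes it below -/
import Mathlib

section
/- Let G = [I_k | P] be a k × n binary matrix in systematic form and H = [Pᵀ | I_{n−k}]. If S ⊆ {1,…,n} is a set of k indices such that the columns of G indexed by S are linearly dependent, then the n−k columns of H indexed by the complement {1,…,n} \ S are linearly dependent. -/
/-- The columns of `M` indexed by `S` are linearly dependent over `F₂`: there is a
nontrivial combination, supported on `S`, of the columns equal to zero. -/
def colsDep {r : ℕ} {ι : Type} [Fintype ι] [DecidableEq ι]
    (M : Matrix (Fin r) ι (ZMod 2)) (S : Finset ι) : Prop :=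
  ∃ c : ι → ZMod 2, c ≠ 0 ∧ (∀ j, c j ≠ 0 → j ∈ S) ∧ M.mulVec c = 0

/-- For `G = [I_k | P]` and `H = [Pᵀ | I_m]` (columns indexed by
`Fin k ⊕ Fin m`), if `S` is a set of `k` column indices whose columns in `G` are linearly
dependent, then the `m = n − k` columns of `H` indexed by the complement of `S` are
linearly dependent. -/
theorem stmt_3 {k m : ℕ} (P : Matrix (Fin k) (Fin m) (ZMod 2))
    (S : Finset (Fin k ⊕ Fin m)) (hS : S.card = k)
    (hdep : colsDep (Matrix.fromCols 1 P) S) :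
    colsDep (Matrix.fromCols P.transpose (1 : Matrix (Fin m) (Fin m) (ZMod 2))) Sᶜ := by
  classical
  obtain ⟨c, hc0, hcS, hGc⟩ := hdep
  set G := Matrix.fromCols (1 : Matrix (Fin k) (Fin k) (ZMod 2)) P with hGdef
  have e : Fin k ≃ S := (Fintype.equivFinOfCardEq (by simpa using hS)).symm
  set M : Matrix (Fin k) (Fin k) (ZMod 2) := fun i j => G i (e j) with hM
  have hv : M.mulVec (fun j => c ((e j) : Fin k ⊕ Fin m)) = 0 := by
    funext i
    have h0 := congrFun hGc i
    simp only [Matrix.mulVec, dotProduct, Pi.zero_apply] at h0 ⊢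
    show ∑ j, G i ((e j) : Fin k ⊕ Fin m) * c ((e j) : Fin k ⊕ Fin m) = 0
    rw [Equiv.sum_comp e (fun s : S => G i (s : Fin k ⊕ Fin m) * c (s : Fin k ⊕ Fin m)),
      Finset.sum_coe_sort S (fun s => G i s * c s), ← h0]
    exact Finset.sum_subset S.subset_univ (fun x _ hx => by
      have hc : c x = 0 := by by_contra h; exact hx (hcS x h)
      simp [hc])
  have hvne : (fun j => c ((e j) : Fin k ⊕ Fin m)) ≠ 0 := by
    obtain ⟨j, hj⟩ := Function.ne_iff.mp hc0
    simp only [Pi.zero_apply] at hj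
    intro h
    have := congrFun h (e.symm ⟨j, hcS j hj⟩)
    simp at this
    exact hj this
  have hdet : M.transpose.det = 0 := by
    rw [Matrix.det_transpose, ← Matrix.exists_mulVec_eq_zero_iff]
    exact ⟨_, hvne, hv⟩
  obtain ⟨x, hx0, hMx⟩ := (Matrix.exists_mulVec_eq_zero_iff).mpr hdet
  refine ⟨fun col => ∑ i, G i col * x i, ?_, ?_, ?_⟩
  · obtain ⟨i, hi⟩ := Function.ne_iff.mp hx0
    intro h
    have := congrFun h (Sum.inl i)
    simp only [Pi.zero_apply, hGdef, Matrix.fromCols_apply_inl] at this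
    rw [Finset.sum_eq_single i (fun b _ hb => by simp [Matrix.one_apply, hb]) (by simp)] at this
    simp [Matrix.one_apply] at this
    exact hi this
  · intro col hcol
    rw [Finset.mem_compl]
    intro hcolS
    apply hcol
    have := congrFun hMx (e.symm ⟨col, hcolS⟩)
    simp only [Matrix.mulVec, dotProduct, Matrix.transpose_apply, Pi.zero_apply, hM] at this
    simpa [Matrix.transpose, Matrix.of_apply] using this
  · funext r
    simp only [Matrix.mulVec, dotProduct, Pi.zero_apply]
    rw [Fintype.sum_sum_type]
    simp only [Matrix.fromCols_apply_inl, Matrix.fromCols_apply_inr, Matrix.transpose_apply,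
      hGdef]
    have h1 : ∀ j : Fin k, ∑ i, (1 : Matrix (Fin k) (Fin k) (ZMod 2)) i j * x i = x j := by
      intro j
      rw [Finset.sum_eq_single j (fun b _ hb => by simp [Matrix.one_apply, hb]) (by simp)]
      simp [Matrix.one_apply]
    simp only [h1]
    rw [Finset.sum_eq_single r (fun b _ hb => by simp [Matrix.one_apply, Ne.symm hb]) (by simp)]
    simp only [Matrix.one_apply_eq, one_mul]
    rw [← Finset.sum_add_distrib]
    apply Finset.sum_eq_zero
    intro i _
    rw [← two_mul]
    simp [show (2 : ZMod 2) = 0 from rfl]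
end

section
/- Let G = [I_k | P] be a k × n binary matrix in systematic form and H = [Pᵀ | I_{n−k}]. A set S ⊆ {1,…,n} of k indices yields linearly independent columns in G if and only if the complementary set {1,…,n} \ S of n−k indices yields linearly independent columns in H. -/
open Matrix Finset

/-- The columns of `M` indexed by `S` are linearly independent over `F₂`. -/
def colsIndep {r : ℕ} {ι : Type} [Fintype ι]
    (M : Matrix (Fin r) ι (ZMod 2)) (S : Finset ι) : Prop :=
  LinearIndependent (ZMod 2) (fun j : {x // x ∈ S} => fun i => M i j.val)

lemma colsIndep_iff_ker {r : ℕ} {ι : Type} [Fintype ι] [DecidableEq ι]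
    (M : Matrix (Fin r) ι (ZMod 2)) (S : Finset ι) :
    colsIndep M S ↔ ∀ c : ι → ZMod 2, (∀ j ∉ S, c j = 0) → M *ᵥ c = 0 → c = 0 := by
  rw [colsIndep, Fintype.linearIndependent_iff]
  constructor
  · intro H c hc hMc
    funext j
    by_cases hj : j ∈ S
    · refine H (fun j : {x // x ∈ S} => c j) ?_ ⟨j, hj⟩
      funext i
      have h1 : (∑ j : {x // x ∈ S}, c j.val • (fun i => M i j.val)) i
          = ∑ j : {x // x ∈ S}, c j.val * M i j.val := by
        simp [Finset.sum_apply]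
      have h2 : ∑ j : {x // x ∈ S}, c j.val * M i j.val = (M *ᵥ c) i := by
        rw [Matrix.mulVec, dotProduct]
        rw [Finset.sum_coe_sort S (fun j => c j * M i j)]
        have e1 : ∑ j ∈ S, c j * M i j = ∑ j ∈ Finset.univ, c j * M i j := by
          refine Finset.sum_subset (Finset.subset_univ S) ?_
          intro x _ hx
          rw [hc x hx, zero_mul]
        rw [e1]
        exact Finset.sum_congr rfl fun x _ => mul_comm _ _
      rw [h1, h2, hMc]
    · exact hc j hj
  · intro K g hg
    set c : ι → ZMod 2 := fun j => if h : j ∈ S then g ⟨j, h⟩ else 0 with hcdef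
    have hsupp : ∀ j ∉ S, c j = 0 := fun j hj => dif_neg hj
    have hMc : M *ᵥ c = 0 := by
      funext i
      rw [Matrix.mulVec, dotProduct]
      have := congrFun hg i
      simp only [Finset.sum_apply, Pi.zero_apply, smul_eq_mul] at this
      calc ∑ j, M i j * c j = ∑ j ∈ S, M i j * c j := by
            refine (Finset.sum_subset (Finset.subset_univ S) ?_).symm
            intro x _ hx; rw [hsupp x hx, mul_zero]
        _ = ∑ j : {x // x ∈ S}, M i j.val * c j.val :=
            (Finset.sum_coe_sort S (fun j => M i j * c j)).symm
        _ = 0 := by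
            rw [← this]
            refine Finset.sum_congr rfl fun x _ => ?_
            rw [mul_comm]
            congr 1
            simp [hcdef, x.2]
    have := K c hsupp hMc
    intro i
    have : c i.val = 0 := by rw [this]; rfl
    simpa [hcdef, i.2] using this

lemma mulVec_inj_iff {γ δ : Type} [Fintype γ] [Fintype δ] (M : Matrix γ δ (ZMod 2)) :
    Function.Injective M.mulVec ↔ ∀ w : δ → ZMod 2, M *ᵥ w = 0 → w = 0 := by
  constructor
  · intro h w hw
    apply h
    rw [hw, Matrix.mulVec_zero]
  · intro h x y hxy
    have : M *ᵥ (x - y) = 0 := by rw [Matrix.mulVec_sub, hxy, sub_self]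
    have := h _ this
    exact sub_eq_zero.mp this

lemma ker_trivial_transpose {α β : Type} [Fintype α] [Fintype β] [DecidableEq α] [DecidableEq β]
    (h : Fintype.card α = Fintype.card β) (Q : Matrix α β (ZMod 2)) :
    (∀ w : β → ZMod 2, Q *ᵥ w = 0 → w = 0) ↔ (∀ u : α → ZMod 2, Qᵀ *ᵥ u = 0 → u = 0) := by
  rw [← mulVec_inj_iff, ← mulVec_inj_iff]
  let e : α ≃ β := Fintype.equivOfCardEq h
  set R : Matrix α α (ZMod 2) := Q.submatrix (Equiv.refl α) e with hRdef
  have hR : R.mulVec = Q.mulVec ∘ fun v => v ∘ ⇑e.symm := by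
    funext v
    exact Matrix.submatrix_mulVec_equiv Q v (Equiv.refl α) e
  have hRT : Rᵀ.mulVec = (fun w => w ∘ ⇑e) ∘ Qᵀ.mulVec := by
    funext u
    have : Rᵀ = Qᵀ.submatrix e (Equiv.refl α) := by rw [hRdef, Matrix.transpose_submatrix]
    rw [this]
    exact Matrix.submatrix_mulVec_equiv Qᵀ u (⇑e) (Equiv.refl α)
  have h1 : Function.Injective Q.mulVec ↔ Function.Injective R.mulVec := by
    rw [hR]
    constructor
    · intro hq
      exact hq.comp fun x y hxy => by
        funext b; have := congrFun hxy (e b); simpa using this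
    · intro hr
      intro x y hxy
      have : (Q.mulVec ∘ fun v => v ∘ ⇑e.symm) (x ∘ ⇑e) = (Q.mulVec ∘ fun v => v ∘ ⇑e.symm) (y ∘ ⇑e) := by
        simp only [Function.comp_apply]
        have hx : (x ∘ ⇑e) ∘ ⇑e.symm = x := by funext b; simp
        have hy : (y ∘ ⇑e) ∘ ⇑e.symm = y := by funext b; simp
        rw [hx, hy, hxy]
      have := hr this
      funext b
      have := congrFun this (e.symm b)
      simpa using this
  have h2 : Function.Injective Qᵀ.mulVec ↔ Function.Injective Rᵀ.mulVec := by
    rw [hRT]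
    constructor
    · intro hq
      refine (Function.Injective.comp ?_ hq)
      intro x y hxy
      funext a
      have := congrFun hxy (e.symm a)
      simpa using this
    · intro hr x y hxy
      apply hr
      simp only [Function.comp_apply, hxy]
  rw [h1, h2, Matrix.mulVec_injective_iff_isUnit, Matrix.mulVec_injective_iff_isUnit,
    Matrix.isUnit_transpose]

lemma sum_restrict {n : ℕ} (T : Finset (Fin n)) (f g : Fin n → ZMod 2)
    (hg : ∀ j ∉ T, g j = 0) :
    ∑ j : {x // x ∈ T}, f j.1 * g j.1 = ∑ j, f j * g j := by
  rw [Finset.sum_coe_sort T (fun j => f j * g j)]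
  refine Finset.sum_subset (Finset.subset_univ T) ?_
  intro x _ hx
  rw [hg x hx, mul_zero]

/-- For `G = [I_k | P]` and `H = [Pᵀ | I_m]` (columns indexed by
`Fin k ⊕ Fin m`), a set `S` of `k` indices yields linearly independent columns in `G`
iff the complementary set of `m = n − k` indices yields linearly independent columns
in `H`. -/
theorem stmt_4 {k m : ℕ} (P : Matrix (Fin k) (Fin m) (ZMod 2))
    (S : Finset (Fin k ⊕ Fin m)) (hS : S.card = k) :
    colsIndep (Matrix.fromCols 1 P) S ↔
      colsIndep (Matrix.fromCols P.transpose (1 : Matrix (Fin m) (Fin m) (ZMod 2))) Sᶜ := by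
  classical
  set A : Finset (Fin k) := S.toLeft with hA
  set B : Finset (Fin m) := S.toRight with hB
  have hmemA : ∀ a : Fin k, a ∈ A ↔ Sum.inl a ∈ S := fun a => Finset.mem_toLeft
  have hmemB : ∀ b : Fin m, b ∈ B ↔ Sum.inr b ∈ S := fun b => Finset.mem_toRight
  have hcardAB : A.card + B.card = k := by
    rw [hA, hB, Finset.card_toLeft_add_card_toRight, hS]
  have hcardAc : Aᶜ.card = B.card := by
    have := Finset.card_compl A
    have hle : A.card ≤ k := by omega
    simp only [Fintype.card_fin] at this
    omega
  set Q : Matrix {a // a ∈ Aᶜ} {b // b ∈ B} (ZMod 2) := fun a b => P a.1 b.1 with hQ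
  have hcards : Fintype.card {a // a ∈ Aᶜ} = Fintype.card {b // b ∈ B} := by
    rw [Fintype.card_coe, Fintype.card_coe, hcardAc]
  -- Left side characterization
  have hL : colsIndep (Matrix.fromCols 1 P) S ↔
      (∀ w : {b // b ∈ B} → ZMod 2, Q *ᵥ w = 0 → w = 0) := by
    rw [colsIndep_iff_ker]
    constructor
    · intro hker w hw
      set v : Fin m → ZMod 2 := fun b => if h : b ∈ B then w ⟨b, h⟩ else 0 with hv
      have hvB : ∀ b ∉ B, v b = 0 := fun b hb => dif_neg hb
      have key : ∀ a (ha : a ∈ Aᶜ), (P *ᵥ v) a = (Q *ᵥ w) ⟨a, ha⟩ := by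
        intro a ha
        rw [Matrix.mulVec, Matrix.mulVec, dotProduct, dotProduct]
        rw [← sum_restrict B (fun b => P a b) v hvB]
        refine (Finset.sum_congr rfl fun b _ => ?_).symm
        simp [hQ, hv, b.2]
      set c : (Fin k ⊕ Fin m) → ZMod 2 := Sum.elim (-(P *ᵥ v)) v with hc
      have hsupp : ∀ j ∉ S, c j = 0 := by
        intro j hj
        cases j with
        | inl a =>
          have ha : a ∈ Aᶜ := by
            rw [Finset.mem_compl]; intro h; exact hj ((hmemA a).mp h)
          show -(P *ᵥ v) a = 0
          rw [key a ha, hw]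
          simp
        | inr b =>
          exact hvB b (fun h => hj ((hmemB b).mp h))
      have hGc : Matrix.fromCols 1 P *ᵥ c = 0 := by
        rw [hc, Matrix.fromCols_mulVec_sumElim, Matrix.one_mulVec, neg_add_cancel]
      have hc0 := hker c hsupp hGc
      funext b
      have : c (Sum.inr b.1) = 0 := by rw [hc0]; rfl
      have hvb : v b.1 = 0 := this
      rw [hv] at hvb
      simpa [b.2] using hvb
    · intro hQker c hsupp hGc
      set u : Fin k → ZMod 2 := fun a => c (Sum.inl a) with hu
      set v : Fin m → ZMod 2 := fun b => c (Sum.inr b) with hv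
      have hcel : c = Sum.elim u v := by funext j; cases j <;> rfl
      rw [hcel, Matrix.fromCols_mulVec_sumElim, Matrix.one_mulVec] at hGc
      have hvB : ∀ b ∉ B, v b = 0 := by
        intro b hb
        exact hsupp (Sum.inr b) (fun h => hb ((hmemB b).mpr h))
      have huA : ∀ a ∈ Aᶜ, u a = 0 := by
        intro a ha
        rw [Finset.mem_compl] at ha
        exact hsupp (Sum.inl a) (fun h => ha ((hmemA a).mpr h))
      set w : {b // b ∈ B} → ZMod 2 := fun b => v b.1 with hw
      have hQw : Q *ᵥ w = 0 := by
        funext a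
        obtain ⟨a, ha⟩ := a
        have h1 : (Q *ᵥ w) ⟨a, ha⟩ = (P *ᵥ v) a := by
          rw [Matrix.mulVec, Matrix.mulVec, dotProduct, dotProduct]
          rw [← sum_restrict B (fun b => P a b) v hvB]
        have h2 : u a + (P *ᵥ v) a = 0 := congrFun hGc a
        rw [huA a ha, zero_add] at h2
        rw [h1, h2]; rfl
      have hw0 := hQker w hQw
      have hv0 : v = 0 := by
        funext b
        by_cases hb : b ∈ B
        · have : w ⟨b, hb⟩ = 0 := by rw [hw0]; rfl
          exact this
        · exact hvB b hb
      have hu0 : u = 0 := by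
        have := hGc
        rw [hv0, Matrix.mulVec_zero, add_zero] at this
        exact this
      rw [hcel, hu0, hv0]
      funext j; cases j <;> rfl
  -- Right side characterization
  have hR : colsIndep (Matrix.fromCols P.transpose (1 : Matrix (Fin m) (Fin m) (ZMod 2))) Sᶜ ↔
      (∀ u : {a // a ∈ Aᶜ} → ZMod 2, Qᵀ *ᵥ u = 0 → u = 0) := by
    rw [colsIndep_iff_ker]
    have hmemAc : ∀ a : Fin k, a ∈ Aᶜ ↔ Sum.inl a ∈ Sᶜ := by
      intro a
      rw [Finset.mem_compl, Finset.mem_compl, hmemA]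
    have hmemBc : ∀ b : Fin m, b ∈ Bᶜ ↔ Sum.inr b ∈ Sᶜ := by
      intro b
      rw [Finset.mem_compl, Finset.mem_compl, hmemB]
    constructor
    · intro hker u' hu'
      set uu : Fin k → ZMod 2 := fun a => if h : a ∈ Aᶜ then u' ⟨a, h⟩ else 0 with huu
      have huuA : ∀ a ∉ Aᶜ, uu a = 0 := fun a ha => dif_neg ha
      have key : ∀ b (hb : b ∈ B), (P.transpose *ᵥ uu) b = (Qᵀ *ᵥ u') ⟨b, hb⟩ := by
        intro b hb
        rw [Matrix.mulVec, Matrix.mulVec, dotProduct, dotProduct]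
        rw [← sum_restrict Aᶜ (fun a => P.transpose b a) uu huuA]
        refine (Finset.sum_congr rfl fun a _ => ?_).symm
        simp only [hQ, huu, Matrix.transpose_apply]
        rw [dif_pos a.2]; rfl
      set c : (Fin k ⊕ Fin m) → ZMod 2 := Sum.elim uu (-(P.transpose *ᵥ uu)) with hc
      have hsupp : ∀ j ∉ Sᶜ, c j = 0 := by
        intro j hj
        cases j with
        | inl a =>
          exact huuA a (fun h => hj ((hmemAc a).mp h))
        | inr b =>
          have hb : b ∈ B := by
            by_contra hbB
            exact hj ((hmemBc b).mp (Finset.mem_compl.mpr hbB))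
          show -(P.transpose *ᵥ uu) b = 0
          rw [key b hb, hu']
          simp
      have hHc : Matrix.fromCols P.transpose 1 *ᵥ c = 0 := by
        rw [hc, Matrix.fromCols_mulVec_sumElim, Matrix.one_mulVec, add_neg_cancel]
      have hc0 := hker c hsupp hHc
      funext a
      have : c (Sum.inl a.1) = 0 := by rw [hc0]; rfl
      have hua : uu a.1 = 0 := this
      rw [huu] at hua
      simpa [a.2] using hua
    · intro hQker c hsupp hHc
      set uu : Fin k → ZMod 2 := fun a => c (Sum.inl a) with huu
      set vv : Fin m → ZMod 2 := fun b => c (Sum.inr b) with hvv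
      have hcel : c = Sum.elim uu vv := by funext j; cases j <;> rfl
      rw [hcel, Matrix.fromCols_mulVec_sumElim, Matrix.one_mulVec] at hHc
      have huuA : ∀ a ∉ Aᶜ, uu a = 0 := by
        intro a ha
        refine hsupp (Sum.inl a) (fun h => ha ((hmemAc a).mpr h))
      have hvvB : ∀ b ∈ B, vv b = 0 := by
        intro b hb
        refine hsupp (Sum.inr b) (fun h => ?_)
        rw [← hmemBc b, Finset.mem_compl] at h
        exact h hb
      set u' : {a // a ∈ Aᶜ} → ZMod 2 := fun a => uu a.1 with hu'
      have hQu' : Qᵀ *ᵥ u' = 0 := by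
        funext b
        obtain ⟨b, hb⟩ := b
        have h1 : (Qᵀ *ᵥ u') ⟨b, hb⟩ = (P.transpose *ᵥ uu) b := by
          rw [Matrix.mulVec, Matrix.mulVec, dotProduct, dotProduct]
          rw [← sum_restrict Aᶜ (fun a => P.transpose b a) uu huuA]
          exact Finset.sum_congr rfl fun a _ => by simp [hQ, hu', Matrix.transpose_apply]; exact Or.inl rfl
        have h2 : (P.transpose *ᵥ uu) b + vv b = 0 := congrFun hHc b
        rw [hvvB b hb, add_zero] at h2
        rw [h1, h2]; rfl
      have hu0 := hQker u' hQu'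
      have huu0 : uu = 0 := by
        funext a
        by_cases ha : a ∈ Aᶜ
        · have : u' ⟨a, ha⟩ = 0 := by rw [hu0]; rfl
          exact this
        · exact huuA a ha
      have hvv0 : vv = 0 := by
        have := hHc
        rw [huu0, Matrix.mulVec_zero, zero_add] at this
        exact this
      rw [hcel, huu0, hvv0]
      funext j; cases j <;> rfl
  rw [hL, hR]
  exact ker_trivial_transpose hcards Q
end

section
/- Let G = [I_k | P] be a k × n binary matrix in systematic form and H = [Pᵀ | I_{n−k}]. The number of k-element subsets S of {1,…,n} for which the k × k submatrix of G on columns S is invertible equals the number of (n−k)-element subsets T of {1,…,n} for which the (n−k) × (n−k) submatrix of H on columns T is invertible. -/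
open scoped Classical

/-- The number of `c`-element sets of column indices of `M` giving linearly independent
columns (equivalently, invertible `c × c` submatrices). -/
noncomputable def numInvertibleSub {r : ℕ} {ι : Type} [Fintype ι]
    (M : Matrix (Fin r) ι (ZMod 2)) (c : ℕ) : ℕ :=
  ((Finset.univ.powersetCard c).filter (fun S => colsIndep M S)).card

open Matrix in
lemma colsIndep_iff {r : ℕ} {ι : Type} [Fintype ι] (M : Matrix (Fin r) ι (ZMod 2))
    (S : Finset ι) (hS : S.card = r) :
    colsIndep M S ↔ ∀ x : Fin r → ZMod 2, (∀ j ∈ S, (x ᵥ* M) j = 0) → x = 0 := by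
  have e : {x // x ∈ S} ≃ Fin r := Fintype.equivFinOfCardEq (by simpa using hS)
  set A : Matrix (Fin r) (Fin r) (ZMod 2) := fun i t => M i (e.symm t).val with hA
  have hAv : ∀ (x : Fin r → ZMod 2) (t : Fin r), (x ᵥ* A) t = (x ᵥ* M) (e.symm t).val := by
    intro x t
    simp [Matrix.vecMul, dotProduct, hA]
  have h1 : colsIndep M S ↔ LinearIndependent (ZMod 2) (fun t : Fin r => fun i => A i t) := by
    unfold colsIndep
    rw [← linearIndependent_equiv e.symm (f := fun j : {x // x ∈ S} => fun i => M i j.val)]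
    rfl
  have h2 : (fun t : Fin r => fun i => A i t) = A.col := rfl
  rw [h1, h2, Matrix.linearIndependent_cols_iff_isUnit, ← Matrix.vecMul_injective_iff_isUnit]
  constructor
  · intro hinj x hx
    have hx0 : x ᵥ* A = (0 : Fin r → ZMod 2) ᵥ* A := by
      ext t
      rw [hAv, Matrix.zero_vecMul]
      exact hx _ (e.symm t).2
    simpa using hinj hx0
  · intro h x y hxy
    have hxy' : x ᵥ* A = y ᵥ* A := hxy
    have hsub : (x - y) ᵥ* A = 0 := by
      rw [Matrix.sub_vecMul, hxy', sub_self]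
    have : x - y = 0 := by
      refine h (x - y) fun j hj => ?_
      have := congr_fun hsub (e ⟨j, hj⟩)
      rwa [hAv, Equiv.symm_apply_apply] at this
    exact sub_eq_zero.mp this

open Matrix in
lemma key {k m : ℕ} {ι : Type} [Fintype ι] [DecidableEq ι] (hn : Fintype.card ι = k + m)
    (G : Matrix (Fin k) ι (ZMod 2)) (H : Matrix (Fin m) ι (ZMod 2))
    (horth : G * Hᵀ = 0)
    (hH : ∀ y : Fin m → ZMod 2, y ᵥ* H = 0 → y = 0)
    (S : Finset ι) (hS : S.card = k) (hG : colsIndep G S) :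
    colsIndep H Sᶜ := by
  have hSc : Sᶜ.card = m := by
    have := Finset.card_compl S
    omega
  rw [colsIndep_iff H Sᶜ hSc]
  rw [colsIndep_iff G S hS] at hG
  intro y hy
  set φ : (Fin k → ZMod 2) →ₗ[ZMod 2] ({x // x ∈ S} → ZMod 2) :=
    (LinearMap.funLeft (ZMod 2) (ZMod 2) Subtype.val).comp G.vecMulLinear with hφ
  have hφapp : ∀ (x : Fin k → ZMod 2) (j : {x // x ∈ S}), φ x j = (x ᵥ* G) j.val := by
    intro x j; rfl
  have hinj : Function.Injective φ := by
    rw [← LinearMap.ker_eq_bot, LinearMap.ker_eq_bot']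
    intro x hx
    exact hG x fun j hj => congr_fun hx ⟨j, hj⟩
  have hsurj : Function.Surjective φ :=
    (LinearMap.injective_iff_surjective_of_finrank_eq_finrank
      (by simp [Module.finrank_fintype_fun_eq_card, hS])).mp hinj
  have hdot : ∀ x : Fin k → ZMod 2, (x ᵥ* G) ⬝ᵥ (y ᵥ* H) = 0 := by
    intro x
    rw [← Matrix.mulVec_transpose H, dotProduct_mulVec, Matrix.vecMul_vecMul, horth]
    simp
  apply hH
  have hyS : ∀ j ∈ S, (y ᵥ* H) j = 0 := by
    intro j0 hj0
    obtain ⟨x, hx⟩ := hsurj (Pi.single ⟨j0, hj0⟩ 1)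
    have h0 := hdot x
    rw [dotProduct] at h0
    have hsum : ∑ j : ι, (x ᵥ* G) j * (y ᵥ* H) j = ∑ j ∈ S, (x ᵥ* G) j * (y ᵥ* H) j := by
      refine (Finset.sum_subset S.subset_univ ?_).symm
      intro j _ hj
      rw [hy j (Finset.mem_compl.mpr hj), mul_zero]
    rw [hsum] at h0
    have hval : ∀ j, j ∈ S → (x ᵥ* G) j = if j = j0 then 1 else 0 := by
      intro j hj
      rw [← hφapp x ⟨j, hj⟩, hx]
      by_cases h : j = j0
      · subst h; rw [if_pos rfl]; exact Pi.single_eq_same _ _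
      · rw [if_neg h]; exact Pi.single_eq_of_ne (fun hh => h (congrArg Subtype.val hh)) _
    have hfin : ∑ j ∈ S, (x ᵥ* G) j * (y ᵥ* H) j = (y ᵥ* H) j0 := by
      rw [Finset.sum_eq_single_of_mem j0 hj0]
      · rw [hval j0 hj0, if_pos rfl, one_mul]
      · intro j hj hne
        rw [hval j hj, if_neg hne, zero_mul]
    rw [← hfin]
    exact h0
  ext j
  by_cases hj : j ∈ S
  · exact hyS j hj
  · exact hy j (Finset.mem_compl.mpr hj)


open Matrix

/-- For `G = [I_k | P]` and `H = [Pᵀ | I_m]` (columns indexed by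
`Fin k ⊕ Fin m`, `n = k + m`), the number of `k`-element column subsets of `G` giving
invertible `k × k` submatrices equals the number of `m = n − k`-element column subsets
of `H` giving invertible `m × m` submatrices. -/
theorem stmt_5 {k m : ℕ} (P : Matrix (Fin k) (Fin m) (ZMod 2)) :
    numInvertibleSub (Matrix.fromCols 1 P : Matrix (Fin k) (Fin k ⊕ Fin m) (ZMod 2)) k =
      numInvertibleSub
        (Matrix.fromCols P.transpose 1 : Matrix (Fin m) (Fin k ⊕ Fin m) (ZMod 2)) m := by


  set G : Matrix (Fin k) (Fin k ⊕ Fin m) (ZMod 2) := Matrix.fromCols 1 P with hGdef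
  set H : Matrix (Fin m) (Fin k ⊕ Fin m) (ZMod 2) := Matrix.fromCols P.transpose 1 with hHdef
  have hn : Fintype.card (Fin k ⊕ Fin m) = k + m := by simp
  have horth1 : G * Hᵀ = 0 := by
    rw [hGdef, hHdef, Matrix.transpose_fromCols, Matrix.fromCols_mul_fromRows]
    ext i j
    simp [CharTwo.add_self_eq_zero]
  have horth2 : H * Gᵀ = 0 := by
    rw [hGdef, hHdef, Matrix.transpose_fromCols, Matrix.fromCols_mul_fromRows]
    ext i j
    simp [CharTwo.add_self_eq_zero]
  have hHrows : ∀ y : Fin m → ZMod 2, y ᵥ* H = 0 → y = 0 := by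
    intro y hy
    ext j
    have := congr_fun hy (Sum.inr j)
    simpa [hHdef, Matrix.vecMul_fromCols] using this
  have hGrows : ∀ x : Fin k → ZMod 2, x ᵥ* G = 0 → x = 0 := by
    intro x hx
    ext i
    have := congr_fun hx (Sum.inl i)
    simpa [hGdef, Matrix.vecMul_fromCols] using this
  unfold numInvertibleSub
  refine Finset.card_bij' (fun S _ => Sᶜ) (fun T _ => Tᶜ) ?_ ?_ ?_ ?_
  · intro S hS
    simp only [Finset.mem_filter, Finset.mem_powersetCard_univ] at hS ⊢
    have hc : Sᶜ.card = m := by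
      have := Finset.card_compl S; omega
    exact ⟨hc, key hn G H horth1 hHrows S hS.1 hS.2⟩
  · intro T hT
    simp only [Finset.mem_filter, Finset.mem_powersetCard_univ] at hT ⊢
    have hc : Tᶜ.card = k := by
      have := Finset.card_compl T; omega
    have := key (by omega : Fintype.card (Fin k ⊕ Fin m) = m + k) H G horth2 hGrows T hT.1 hT.2
    exact ⟨hc, this⟩
  · intro S _; exact compl_compl S
  · intro T _; exact compl_compl T
end
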